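/- arXiv:2208.07125 — 4 statements merged into one kernel-verified Lean document; each statement's English description precedes it below -/
import Mathlib

section
/- Let A, B and C be (possibly non-unital) rings and let f : A → B and g : B → C be ring homomorphisms. If the composite g∘f is a near isomorphism and f is surjective, then both f and g are near isomorphisms. -/
/-- A *near isomorphism* is a surjective homomorphism `f : A → B` of (possibly non-unital)
rings such that `A·ker(f) = ker(f)·A = 0`, i.e. `a * k = 0` and `k * a = 0` for every
`a ∈ A` and every `k ∈ ker f`. -/
def IsNearIso {A B : Type*} [NonUnitalRing A] [NonUnitalRing B] (f : A →ₙ+* B) : Prop :=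
  Function.Surjective f ∧ ∀ a k : A, f k = 0 → a * k = 0 ∧ k * a = 0

/-- If `g ∘ f` is a near isomorphism and `f` is surjective then both `f` and `g` are
near isomorphisms. -/
theorem isNearIso_of_comp_isNearIso
    {A B C : Type*} [NonUnitalRing A] [NonUnitalRing B] [NonUnitalRing C]
    (f : A →ₙ+* B) (g : B →ₙ+* C)
    (hgf : IsNearIso (g.comp f)) (hf : Function.Surjective f) :
    IsNearIso f ∧ IsNearIso g := by
  obtain ⟨hsurj, hker⟩ := hgf
  refine ⟨⟨hf, fun a k hk => ?_⟩, ⟨?_, fun b k hk => ?_⟩⟩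
  · exact hker a k (by simp [hk])
  · intro c
    obtain ⟨a, ha⟩ := hsurj c
    exact ⟨f a, ha⟩
  · obtain ⟨a, ha⟩ := hf b
    obtain ⟨k', hk'⟩ := hf k
    obtain ⟨h1, h2⟩ := hker a k' (by simpa [hk'] using hk)
    constructor
    · rw [← ha, ← hk', ← map_mul, h1, map_zero]
    · rw [← ha, ← hk', ← map_mul, h2, map_zero]
end

section
/- Let A and B be (possibly non-unital) rings and let f : A → B be a near isomorphism. Then f induces a bijection from the set of idempotents of A onto the set of idempotents of B; that is, f maps idempotents to idempotents, f is injective on idempotents, and every idempotent of B is the image under f of an idempotent of A. -/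
/-- A near isomorphism induces a bijection between the sets of idempotents: it maps
idempotents to idempotents, is injective on idempotents, and every idempotent of the
target is the image of an idempotent of the source. -/
theorem isNearIso_bijOn_idempotents
    {A B : Type*} [NonUnitalRing A] [NonUnitalRing B]
    (f : A →ₙ+* B) (hf : IsNearIso f) :
    (∀ a : A, IsIdempotentElem a → IsIdempotentElem (f a)) ∧
      (∀ a a' : A, IsIdempotentElem a → IsIdempotentElem a' → f a = f a' → a = a') ∧
      (∀ b : B, IsIdempotentElem b → ∃ a : A, IsIdempotentElem a ∧ f a = b) := by
  obtain ⟨hsurj, hker⟩ := hf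
  refine ⟨fun a ha => ?_, fun a a' ha ha' hfa => ?_, fun b hb => ?_⟩
  · unfold IsIdempotentElem at *
    rw [← map_mul, ha]
  · have hk : f (a - a') = 0 := by rw [map_sub, hfa, sub_self]
    have h1 : a' * (a - a') = 0 := (hker a' _ hk).1
    have h2 : (a - a') * a' = 0 := (hker a' _ hk).2
    have h3 : (a - a') * (a - a') = 0 := (hker _ _ hk).1
    have key : a = a' + (a - a') := by abel
    calc a = a * a := ha.symm
      _ = (a' + (a - a')) * (a' + (a - a')) := by rw [← key]
      _ = a' * a' + a' * (a - a') + ((a - a') * a' + (a - a') * (a - a')) := by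
          rw [add_mul, mul_add, mul_add]
      _ = a' := by rw [ha', h1, h2, h3, add_zero, add_zero, add_zero]
  · obtain ⟨x, hx⟩ := hsurj b
    have hk : f (x * x - x) = 0 := by
      rw [map_sub, map_mul, hx, hb, sub_self]
    have h1 : x * (x * x - x) = 0 := (hker x _ hk).1
    refine ⟨x * x, ?_, by rw [map_mul, hx, hb]⟩
    unfold IsIdempotentElem
    have hx3 : x * (x * x) = x * x := by
      rw [mul_sub, sub_eq_zero] at h1; exact h1
    calc x * x * (x * x) = x * (x * (x * x)) := by rw [mul_assoc]
      _ = x * (x * x) := by rw [hx3, hx3]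
      _ = x * x := hx3
end

section
/- Let A and B be (possibly non-unital) rings, let f : A → B be a near isomorphism and let x ∈ A be a local idempotent. Then f(x) is a local idempotent of B. -/
/-- `x` is a unit of the corner ring `eAe` (whose identity element is `e`):
there is `y ∈ eAe` with `x * y = y * x = e`. -/
def IsCornerUnit {A : Type*} [NonUnitalRing A] (e x : A) : Prop :=
  ∃ y : A, e * y * e = y ∧ x * y = e ∧ y * x = e

/-- An idempotent `e` of a (possibly non-unital) ring `A` is a *local idempotent* if the
corner ring `eAe` (a unital ring with identity `e`) is a local ring, i.e. it is nonzero
and every element of `eAe` is a unit or its difference from the identity `e` is a unit. -/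
def IsLocalIdempotent {A : Type*} [NonUnitalRing A] (e : A) : Prop :=
  IsIdempotentElem e ∧ e ≠ 0 ∧
    ∀ x : A, e * x * e = x → (IsCornerUnit e x ∨ IsCornerUnit e (e - x))

/-- A near isomorphism sends local idempotents to local idempotents. -/
theorem isLocalIdempotent_image_of_isNearIso
    {A B : Type*} [NonUnitalRing A] [NonUnitalRing B]
    (f : A →ₙ+* B) (hf : IsNearIso f)
    (x : A) (hx : IsLocalIdempotent x) :
    IsLocalIdempotent (f x) := by
  obtain ⟨hidem, hne, hloc⟩ := hx
  have hmap : ∀ e u : A, IsCornerUnit e u → IsCornerUnit (f e) (f u) := by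
    rintro e u ⟨y, h1, h2, h3⟩
    exact ⟨f y, by rw [← map_mul, ← map_mul, h1], by rw [← map_mul, h2],
      by rw [← map_mul, h3]⟩
  refine ⟨by rw [IsIdempotentElem, ← map_mul, hidem], ?_, ?_⟩
  · intro h
    have := (hf.2 x x h).1
    rw [hidem] at this
    exact hne this
  · intro b hb
    obtain ⟨a, ha⟩ := hf.1 b
    set x' := x * a * x with hx'
    have hfx' : f x' = b := by
      rw [hx', map_mul, map_mul, ha, hb]
    have hxx : x * x' * x = x' := by
      have : x * (x * a * x) * x = (x * x) * a * (x * x) := by noncomm_ring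
      rw [hx', this, hidem]
    rcases hloc x' hxx with h | h
    · left
      have := hmap x x' h
      rwa [hfx'] at this
    · right
      have := hmap x (x - x') h
      rwa [map_sub, hfx'] at this
end

section
/- Let R be a commutative ring, let A and B be unital R-algebras, let C and J be two-sided ideals of A, let K be a two-sided ideal of B, and let I be an additive subgroup of C satisfying C·I ⊆ I and I·C ⊆ I. Let f : C → B and g : B → C + J be R-linear maps. Assume: (1) (C ∩ J)·C ⊆ I, C·(C ∩ J) ⊆ I, and I ⊆ C ∩ J; (2) g(K) ⊆ J; (3) f(I) ⊆ K; (4) f is surjective onto B; (5) g sends idempotents of B to idempotents of A; (6) f(x·y) − f(x)·f(y) ∈ K for all x, y ∈ C, and g(v·w) − g(v)·g(w) ∈ J for all v, w ∈ B; (7) g(f(x)) − x ∈ J for all x ∈ C. Let b ∈ B be a local idempotent with b ∉ K, and suppose g(b) = a₀ + a₁ + ⋯ + aₙ, where a₀, …, aₙ are pairwise orthogonal local idempotents of A. Then there exists exactly one index j ∈ {0, …, n} such that aⱼ ∉ J; moreover, for this index j one has aⱼ ∈ C (so aⱼ ∈ C \ (C ∩ J)), g(b) − aⱼ ∈ J,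 and f(aⱼ) − b ∈ K. -/
/-- The ring congruence attached to a two-sided ideal given as a submodule. -/
def idealCon {R B : Type*} [CommRing R] [Ring B] [Algebra R B]
    (K : Submodule R B) (hK : ∀ b x : B, x ∈ K → b * x ∈ K ∧ x * b ∈ K) : RingCon B where
  r u v := u - v ∈ K
  iseqv := ⟨fun u => by simp, fun {u v} h => by simpa [neg_sub] using K.neg_mem h,
    fun {u v w} h1 h2 => by simpa using K.add_mem h1 h2⟩
  add' {u v s t} h1 h2 := by
    show u + s - (v + t) ∈ K
    have h : u + s - (v + t) = (u - v) + (s - t) := by abel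
    rw [h]; exact K.add_mem h1 h2
  mul' {u v s t} h1 h2 := by
    show u * s - v * t ∈ K
    have h : u * s - v * t = u * (s - t) + (u - v) * t := by noncomm_ring
    rw [h]; exact K.add_mem (hK u _ h2).1 (hK t _ h1).2

/-- Proposition: the abstract Green correspondence for idempotents.  `A` and `B` are
unital `R`-algebras, `C` and `J` are two-sided ideals of `A` (in particular
`R`-submodules), `K` is a two-sided ideal of `B`, `I` is an additive subgroup of `C`
with `C·I ⊆ I` and `I·C ⊆ I`, and `f : C → B`, `g : B → C + J` are `R`-linear maps
satisfying conditions (1)-(7).  If `b ∈ B` is a local idempotent with `b ∉ K` and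
`g b = a₀ + ⋯ + aₙ` with the `aᵢ` pairwise orthogonal local idempotents of `A`, then
there is exactly one index `j` with `aⱼ ∉ J`; for it `aⱼ ∈ C` (hence
`aⱼ ∈ C \ (C ∩ J)`), `g b − aⱼ ∈ J` and `f aⱼ − b ∈ K`. -/
theorem green_correspondence_for_idempotents
    {R A B : Type*} [CommRing R] [Ring A] [Ring B] [Algebra R A] [Algebra R B]
    (C J : Submodule R A) (K : Submodule R B)
    -- `C`, `J` and `K` are two-sided ideals
    (hC : ∀ a x : A, x ∈ C → a * x ∈ C ∧ x * a ∈ C)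
    (hJ : ∀ a x : A, x ∈ J → a * x ∈ J ∧ x * a ∈ J)
    (hK : ∀ b x : B, x ∈ K → b * x ∈ K ∧ x * b ∈ K)
    -- `I` is an additive subgroup of `C` with `C·I ⊆ I` and `I·C ⊆ I`
    (I : AddSubgroup A) (hIC : ∀ x ∈ I, x ∈ C)
    (hCI : ∀ c x : A, c ∈ C → x ∈ I → c * x ∈ I ∧ x * c ∈ I)
    -- the `R`-linear maps
    (f : C →ₗ[R] B) (g : B →ₗ[R] ↥(C ⊔ J))
    -- (1) `(C ∩ J)·C ⊆ I`, `C·(C ∩ J) ⊆ I` and `I ⊆ C ∩ J`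
    (h1a : ∀ x c : A, x ∈ C → x ∈ J → c ∈ C → x * c ∈ I ∧ c * x ∈ I)
    (h1b : ∀ x ∈ I, x ∈ J)
    -- (2) `g(K) ⊆ J`
    (h2 : ∀ b : B, b ∈ K → (↑(g b) : A) ∈ J)
    -- (3) `f(I) ⊆ K`
    (h3 : ∀ x : C, (x : A) ∈ I → f x ∈ K)
    -- (4) `f` is surjective onto `B`
    (h4 : Function.Surjective f)
    -- (5) `g` sends idempotents to idempotents
    (h5 : ∀ b : B, IsIdempotentElem b → IsIdempotentElem (↑(g b) : A))
    -- (6) `f` and `g` commute with multiplication modulo `K` and `J` respectively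
    (h6f : ∀ x y : C, f ⟨(x : A) * (y : A), (hC (x : A) (y : A) y.2).1⟩ - f x * f y ∈ K)
    (h6g : ∀ v w : B, (↑(g (v * w)) : A) - (↑(g v) : A) * (↑(g w) : A) ∈ J)
    -- (7) `g ∘ f` is the identity modulo `J`
    (h7 : ∀ x : C, (↑(g (f x)) : A) - (x : A) ∈ J)
    -- `b` is a local idempotent of `B` not lying in `K`
    (b : B) (hb : IsLocalIdempotent b) (hbK : b ∉ K)
    -- `g b = a₀ + ⋯ + aₙ` with the `aᵢ` pairwise orthogonal local idempotents of `A`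
    (n : ℕ) (a : Fin (n + 1) → A)
    (ha : ∀ i, IsLocalIdempotent (a i))
    (horth : ∀ i j, i ≠ j → a i * a j = 0)
    (hsum : (↑(g b) : A) = ∑ i, a i) :
    (∃! j : Fin (n + 1), a j ∉ J) ∧
      ∀ j : Fin (n + 1), a j ∉ J →
        a j ∈ C ∧ (↑(g b) : A) - a j ∈ J ∧ ∃ hjC : a j ∈ C, f ⟨a j, hjC⟩ - b ∈ K := by
  classical
  obtain ⟨hbidem, -, hbloc⟩ := hb
  obtain ⟨x, hxb⟩ := h4 b
  set X : A := (x : A) with hX_def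
  have hXC : X ∈ C := x.2
  set E : A := (↑(g b) : A) with hE_def
  -- the quotient rings `A/J` and `B/K`
  set cJ : RingCon A := idealCon J hJ with hcJ_def
  set cK : RingCon B := idealCon K hK with hcK_def
  set pJ : A →+* cJ.Quotient := cJ.mk' with hpJ_def
  set pK : B →+* cK.Quotient := cK.mk' with hpK_def
  have relJ : ∀ u v : A, pJ u = pJ v ↔ u - v ∈ J := by
    intro u v
    rw [show pJ u = (u : cJ.Quotient) from rfl, show pJ v = (v : cJ.Quotient) from rfl,
      RingCon.eq]
    exact Iff.rfl
  have relK : ∀ u v : B, pK u = pK v ↔ u - v ∈ K := by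
    intro u v
    rw [show pK u = (u : cK.Quotient) from rfl, show pK v = (v : cK.Quotient) from rfl,
      RingCon.eq]
    exact Iff.rfl
  have memJ : ∀ u : A, pJ u = 0 ↔ u ∈ J := by
    intro u
    rw [show (0 : cJ.Quotient) = pJ 0 from (map_zero pJ).symm, relJ, sub_zero]
  have memK : ∀ u : B, pK u = 0 ↔ u ∈ K := by
    intro u
    rw [show (0 : cK.Quotient) = pK 0 from (map_zero pK).symm, relK, sub_zero]
  -- basic facts about `E = g b`
  have haidem : ∀ i, a i * a i = a i := fun i => (ha i).1
  have hae : ∀ i, a i * E = a i := by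
    intro i
    rw [hsum, Finset.mul_sum,
      Finset.sum_eq_single i (fun k _ hk => horth i k (Ne.symm hk))
        (fun h => absurd (Finset.mem_univ i) h)]
    exact haidem i
  have haea : ∀ i, a i * E * a i = a i := fun i => by rw [hae i, haidem i]
  have hEX : pJ E = pJ X := by
    have h7x := h7 x
    rw [hxb] at h7x
    exact (relJ _ _).2 h7x
  -- the elements `c' i = aᵢ x aᵢ ∈ C`
  set c' : Fin (n + 1) → A := fun i => a i * X * a i with hc'_def
  have hcC : ∀ i, c' i ∈ C := fun i => (hC (a i) _ (hC (a i) X hXC).1).2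
  have hqC : ∀ i, c' i * c' i ∈ C := fun i => (hC (c' i) (c' i) (hcC i)).1
  set Q : Fin (n + 1) → ↥C := fun i => ⟨c' i * c' i, hqC i⟩ with hQ_def
  set bb : Fin (n + 1) → B := fun i => f (Q i) with hbb_def
  -- mod `J`, `c' i` and `c' i * c' i` agree with `a i`
  have hpJc : ∀ i, pJ (c' i) = pJ (a i) := by
    intro i
    calc pJ (c' i) = pJ (a i) * pJ X * pJ (a i) := by rw [hc'_def]; rw [map_mul, map_mul]
      _ = pJ (a i) * pJ E * pJ (a i) := by rw [hEX]
      _ = pJ (a i * E * a i) := by rw [map_mul, map_mul]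
      _ = pJ (a i) := by rw [haea i]
  have hpJq : ∀ i, pJ (c' i * c' i) = pJ (a i) := by
    intro i
    rw [map_mul, hpJc i, ← map_mul, haidem i]
  -- the sum `T` of the `c' i * c' i`
  set xT : ↥C := ∑ i, Q i with hxT_def
  set T : A := (xT : A) with hT_def
  have hTC : T ∈ C := xT.2
  have hTsum : T = ∑ i, c' i * c' i := by
    rw [hT_def, hxT_def]
    exact map_sum C.subtype Q Finset.univ
  have hXT : X - T ∈ J := by
    rw [← relJ]
    rw [← hEX, hsum, map_sum, hTsum, map_sum]
    exact Finset.sum_congr rfl (fun i _ => (hpJq i).symm)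
  have hXTC : X - T ∈ C := C.sub_mem hXC hTC
  -- key `I`-memberships
  have hXXTT : X * X - T * T ∈ I := by
    have hid : X * X - T * T = X * (X - T) + (X - T) * T := by noncomm_ring
    rw [hid]
    exact I.add_mem (h1a (X - T) X hXTC hXT hXC).2 (h1a (X - T) T hXTC hXT hTC).1
  have hwJ : ∀ i, c' i * c' i - c' i ∈ J := by
    intro i
    rw [← relJ]
    rw [hpJq i, hpJc i]
  have hwC : ∀ i, c' i * c' i - c' i ∈ C := fun i => C.sub_mem (hqC i) (hcC i)
  have hqqI : ∀ i, (c' i * c' i) * (c' i * c' i) - c' i * c' i ∈ I := by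
    intro i
    have hid : (c' i * c' i) * (c' i * c' i) - c' i * c' i =
        c' i * (c' i * c' i - c' i) + (c' i * c' i - c' i) * c' i +
          (c' i * c' i - c' i) * (c' i * c' i - c' i) := by noncomm_ring
    rw [hid]
    exact I.add_mem
      (I.add_mem (h1a _ (c' i) (hwC i) (hwJ i) (hcC i)).2 (h1a _ (c' i) (hwC i) (hwJ i) (hcC i)).1)
      (h1a _ _ (hwC i) (hwJ i) (hwC i)).1
  have horthJ : ∀ i k, i ≠ k → c' i * c' k ∈ J := by
    intro i k hik
    rw [← memJ]
    rw [map_mul, hpJc i, hpJc k, ← map_mul, horth i k hik, map_zero]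
  have horthI : ∀ i k, i ≠ k → (c' i * c' i) * (c' k * c' k) ∈ I := by
    intro i k hik
    have hid : (c' i * c' i) * (c' k * c' k) = c' i * ((c' i * c' k) * c' k) := by noncomm_ring
    rw [hid]
    exact (hCI (c' i) _ (hcC i)
      (h1a (c' i * c' k) (c' k) (hC (c' i) (c' k) (hcC k)).1 (horthJ i k hik) (hcC k)).1).1
  -- mod `K` machinery
  have hmulK : ∀ u v : ↥C,
      pK (f ⟨(u : A) * (v : A), (hC (u : A) (v : A) v.2).1⟩) = pK (f u) * pK (f v) := by
    intro u v
    rw [← map_mul]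
    exact (relK _ _).2 (h6f u v)
  have hIeq : ∀ u v : ↥C, (u : A) - (v : A) ∈ I → pK (f u) = pK (f v) := by
    intro u v h
    refine (relK _ _).2 ?_
    rw [← map_sub f u v]
    exact h3 (u - v) (by rwa [AddSubgroupClass.coe_sub])
  have hIzero : ∀ u : ↥C, (u : A) ∈ I → pK (f u) = 0 := fun u hu => (memK _).2 (h3 u hu)
  set β : Fin (n + 1) → cK.Quotient := fun i => pK (bb i) with hβ_def
  set βb : cK.Quotient := pK b with hβb_def
  have hβidem : ∀ i, β i * β i = β i := by
    intro i
    rw [hβ_def]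
    rw [← hmulK (Q i) (Q i)]
    exact hIeq _ _ (hqqI i)
  have hβorth : ∀ i k, i ≠ k → β i * β k = 0 := by
    intro i k hik
    rw [hβ_def]
    rw [← hmulK (Q i) (Q k)]
    exact hIzero _ (horthI i k hik)
  have hβbidem : βb * βb = βb := by rw [hβb_def, ← map_mul, hbidem]
  have hfxT : pK (f xT) = ∑ i, β i := by
    rw [hxT_def, map_sum f Q Finset.univ, map_sum]
  have hsumβ : βb = ∑ i, β i := by
    calc βb = βb * βb := hβbidem.symm
      _ = pK (f x) * pK (f x) := by rw [hβb_def, hxb]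
      _ = pK (f ⟨X * X, (hC X X x.2).1⟩) := (hmulK x x).symm
      _ = pK (f ⟨T * T, (hC T T xT.2).1⟩) := hIeq _ _ hXXTT
      _ = pK (f xT) * pK (f xT) := hmulK xT xT
      _ = (∑ i, β i) * (∑ i, β i) := by rw [hfxT]
      _ = ∑ i, ∑ k, β i * β k := by rw [Finset.sum_mul_sum]
      _ = ∑ i, β i := Finset.sum_congr rfl (fun i _ => by
            rw [Finset.sum_eq_single i (fun k _ hk => hβorth i k (Ne.symm hk))
              (fun h => absurd (Finset.mem_univ i) h), hβidem i])
  have hbβ : ∀ i, βb * β i = β i := by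
    intro i
    rw [hsumβ, Finset.sum_mul,
      Finset.sum_eq_single i (fun k _ hk => hβorth k i hk)
        (fun h => absurd (Finset.mem_univ i) h), hβidem i]
  have hβbR : ∀ i, β i * βb = β i := by
    intro i
    rw [hsumβ, Finset.mul_sum,
      Finset.sum_eq_single i (fun k _ hk => hβorth i k (Ne.symm hk))
        (fun h => absurd (Finset.mem_univ i) h), hβidem i]
  have hβne : βb ≠ 0 := fun h => hbK ((memK b).1 h)
  -- the local dichotomy coming from `b`
  have hdich : ∀ i, β i = βb ∨ β i = 0 := by
    intro i
    have hcorner : b * (b * bb i * b) * b = b * bb i * b := by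
      have h' : b * (b * bb i * b) * b = (b * b) * bb i * (b * b) := by noncomm_ring
      rw [h', hbidem]
    have hyβ : pK (b * bb i * b) = β i := by
      rw [map_mul, map_mul, show pK (bb i) = β i from rfl, show pK b = βb from rfl,
        hbβ i, hβbR i]
    rcases hbloc (b * bb i * b) hcorner with ⟨z, -, hz1, -⟩ | ⟨z, -, -, hz2⟩
    · left
      have h1 : β i * pK z = βb := by
        rw [← hyβ, ← map_mul, hz1]
      calc β i = β i * βb := (hβbR i).symm
        _ = β i * (β i * pK z) := by rw [h1]
        _ = (β i * β i) * pK z := by rw [mul_assoc]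
        _ = β i * pK z := by rw [hβidem i]
        _ = βb := h1
    · right
      have h2 : pK z * (βb - β i) = βb := by
        rw [show βb - β i = pK (b - b * bb i * b) from by rw [map_sub, hyβ], ← map_mul, hz2]
      have h0 : (βb - β i) * β i = 0 := by
        rw [sub_mul, hbβ i, hβidem i, sub_self]
      calc β i = βb * β i := (hbβ i).symm
        _ = (pK z * (βb - β i)) * β i := by rw [h2]
        _ = pK z * ((βb - β i) * β i) := by rw [mul_assoc]
        _ = 0 := by rw [h0, mul_zero]
  -- the distinguished index `j`
  have hexj : ∃ j, β j ≠ 0 := by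
    by_contra h
    push_neg at h
    exact hβne (by rw [hsumβ]; exact Finset.sum_eq_zero (fun i _ => h i))
  obtain ⟨j, hjne⟩ := hexj
  have hβj : β j = βb := (hdich j).resolve_right hjne
  have hβk : ∀ k, k ≠ j → β k = 0 := by
    intro k hk
    rcases hdich k with hkb | h0
    · exfalso
      apply hβne
      calc βb = βb * βb := hβbidem.symm
        _ = β j * β k := by rw [hβj, hkb]
        _ = 0 := hβorth j k (Ne.symm hk)
    · exact h0
  -- translation between `β i = 0` and `a i ∈ J`
  have haJ_of : ∀ i, β i = 0 → a i ∈ J := by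
    intro i h0
    have hKi : bb i ∈ K := (memK _).1 h0
    have hgJ : (↑(g (bb i)) : A) ∈ J := h2 _ hKi
    have h7i := h7 (Q i)
    have hqJ : c' i * c' i ∈ J := by
      have hsub := J.sub_mem hgJ h7i
      rw [show (↑(g (bb i)) : A) = ↑(g (f (Q i))) from rfl, sub_sub_cancel] at hsub
      exact hsub
    rw [← memJ, ← hpJq i]
    exact (memJ _).2 hqJ
  have hJ_bb : ∀ i, a i ∈ J → β i = 0 := by
    intro i hiJ
    have hcJi : c' i ∈ J := by
      rw [← memJ, hpJc i]
      exact (memJ _).2 hiJ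
    exact hIzero (Q i) (h1a (c' i) (c' i) (hcC i) hcJi (hcC i)).1
  have hiffJ : ∀ i, a i ∉ J ↔ i = j := by
    intro i
    constructor
    · intro hi
      by_contra hij
      exact hi (haJ_of i (hβk i hij))
    · rintro rfl
      intro hiJ
      exact hjne (hJ_bb i hiJ)
  -- the conclusions for the index `j`
  have hajJ : a j ∉ J := (hiffJ j).2 rfl
  have hajC : a j ∈ C := by
    have hcornerA : a j * c' j * a j = c' j := by
      have h' : a j * (a j * X * a j) * a j = (a j * a j) * X * (a j * a j) := by noncomm_ring
      show a j * (a j * X * a j) * a j = a j * X * a j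
      rw [h', haidem j]
    rcases (ha j).2.2 (c' j) hcornerA with ⟨y, -, hy1, -⟩ | ⟨y, -, hy1, -⟩
    · rw [← hy1]
      exact (hC y (c' j) (hcC j)).2
    · exfalso
      have hdJ : a j - c' j ∈ J := (relJ _ _).1 (hpJc j).symm
      exact hajJ (by rw [← hy1]; exact (hJ y _ hdJ).2)
  have hgbaj : E - a j ∈ J := by
    rw [hsum]
    have hsplit : (∑ i, a i) - a j = ∑ i ∈ Finset.univ.erase j, a i := by
      rw [← Finset.sum_erase_add Finset.univ a (Finset.mem_univ j)]
      rw [add_sub_cancel_right]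
    rw [hsplit]
    exact Submodule.sum_mem J
      (fun k hk => haJ_of k (hβk k (Finset.ne_of_mem_erase hk)))
  have hfaj : f ⟨a j, hajC⟩ - b ∈ K := by
    have hdJ : a j - c' j ∈ J := (relJ _ _).1 (hpJc j).symm
    have hdC : a j - c' j ∈ C := C.sub_mem hajC (hcC j)
    have hajq : a j - c' j * c' j ∈ I := by
      have hid : a j - c' j * c' j =
          a j * (a j - c' j) + (a j - c' j) * c' j + (a j - a j * a j) := by noncomm_ring
      rw [hid, haidem j, sub_self, add_zero]
      exact I.add_mem (h1a _ (a j) hdC hdJ hajC).2 (h1a _ (c' j) hdC hdJ (hcC j)).1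
    have h1K : f ⟨a j, hajC⟩ - bb j ∈ K := by
      rw [show f ⟨a j, hajC⟩ - bb j = f (⟨a j, hajC⟩ - Q j) from (map_sub f _ _).symm]
      exact h3 _ (by rwa [AddSubgroupClass.coe_sub])
    have h2K : bb j - b ∈ K := (relK _ _).1 hβj
    have := K.add_mem h1K h2K
    rw [sub_add_sub_cancel] at this
    exact this
  refine ⟨⟨j, hajJ, fun k hk => (hiffJ k).1 hk⟩, ?_⟩
  intro j' hj'
  have hj'j : j' = j := (hiffJ j').1 hj'
  rw [hj'j]
  exact ⟨hajC, hgbaj, hajC, hfaj⟩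
end
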